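/- Distributional estimate for spherical averages: let G be an infinite connected graph with finite degrees and S_G(r) < ∞ for all r. Then there is an absolute constant c such that for every f ∈ L¹(G), every r ≥ 1 and λ > 0, |{x : A°_r f(x) ≥ λ}| ≤ c · Σ_{n≥0, 2^n ≤ 2 S_G(r)} 2^{3n/2} E_G(r) S_G(r)^{1/2} |{x : |f(x)| ≥ 2^{n−1} λ}|. -/

import Mathlib

open scoped ENNReal

noncomputable def sphereCard {V : Type*} (G : SimpleGraph V) (x : V) (r : ℕ) : ℕ :=
  {y | G.dist x y = r}.ncard

/-- The spherical averaging operator `A°_r`. -/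
noncomputable def sphereAvg {V : Type*} (G : SimpleGraph V) (f : V → ℝ) (x : V) (r : ℕ) :
    ℝ≥0∞ :=
  (∑' z : {z : V // G.dist x z = r}, ENNReal.ofReal |f z.1|) / (sphereCard G x r : ℝ≥0∞)

/-- `S_G(r)`, the supremum of the sizes of the spheres of radius `r`. -/
noncomputable def SG {V : Type*} (G : SimpleGraph V) (r : ℕ) : ℕ :=
  sSup (Set.range fun x : V => sphereCard G x r)

/-- The expander function `E_G(r)`. -/
noncomputable def expander {V : Type*} (G : SimpleGraph V) (r : ℕ) : ℝ≥0∞ :=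
  ⨆ (A : Finset V) (_ : A.Nonempty) (B : Finset V) (_ : B.Nonempty),
    ((∑ x ∈ B, (((A : Set V) ∩ {y | G.dist x y = r}).ncard : ℝ≥0∞) /
        (sphereCard G x r : ℝ≥0∞)) ^ 2) / ((A.card : ℝ≥0∞) * (B.card : ℝ≥0∞))

namespace Aux19
open SimpleGraph
variable {V : Type*} {G : SimpleGraph V}

lemma walk_split {x y : V} (p : G.Walk x y) :
    ∀ k, k ≤ p.length → ∃ (z : V) (w1 : G.Walk x z) (w2 : G.Walk z y),
      w1.length = k ∧ w2.length + k = p.length := by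
  induction p with
  | nil =>
    intro k hk
    simp only [Walk.length_nil, Nat.le_zero] at hk
    subst hk
    exact ⟨_, .nil, .nil, rfl, rfl⟩
  | cons h q ih =>
    intro k hk
    cases k with
    | zero => exact ⟨_, .nil, .cons h q, rfl, by simp⟩
    | succ k' =>
      obtain ⟨z, w1, w2, h1, h2⟩ := ih k' (by simpa using hk)
      refine ⟨z, .cons h w1, w2, by simp [h1], by simp [Walk.length_cons]; omega⟩

lemma exists_dist_split (hconn : G.Connected) {x y : V} {k : ℕ} (hk : k ≤ G.dist x y) :
    ∃ z, G.dist x z = k ∧ G.dist z y = G.dist x y - k := by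
  obtain ⟨p, hp⟩ := hconn.exists_walk_length_eq_dist x y
  obtain ⟨z, w1, w2, h1, h2⟩ := walk_split p k (by omega)
  have ha : G.dist x z ≤ k := h1 ▸ SimpleGraph.dist_le w1
  have hb : G.dist z y ≤ w2.length := SimpleGraph.dist_le w2
  have ht := hconn.dist_triangle (u := x) (v := z) (w := y)
  exact ⟨z, by omega, by omega⟩

lemma ball_finite (hconn : G.Connected) (hloc : ∀ x : V, (G.neighborSet x).Finite) :
    ∀ (r : ℕ) (x : V), {y | G.dist x y ≤ r}.Finite := by
  intro r
  induction r with
  | zero =>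
    intro x
    refine (Set.finite_singleton x).subset fun y hy => ?_
    simp only [Set.mem_setOf_eq, Nat.le_zero] at hy
    simp [(hconn.dist_eq_zero_iff.mp hy).symm]
  | succ r ih =>
    intro x
    have hsub : {y | G.dist x y ≤ r + 1} ⊆
        {y | G.dist x y ≤ r} ∪ ⋃ z ∈ {y | G.dist x y ≤ r}, G.neighborSet z := by
      intro y hy
      simp only [Set.mem_setOf_eq] at hy
      by_cases h : G.dist x y ≤ r
      · exact Or.inl h
      · have hd : G.dist x y = r + 1 := by omega
        obtain ⟨z, hz1, hz2⟩ := exists_dist_split hconn (x := x) (y := y) (k := r) (by omega)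
        have hone : G.dist z y = 1 := by omega
        exact Or.inr (Set.mem_biUnion (by simp [hz1]) (SimpleGraph.dist_eq_one_iff_adj.mp hone))
    exact ((ih x).union ((ih x).biUnion fun z _ => hloc z)).subset hsub

lemma sphere_finite (hconn : G.Connected) (hloc : ∀ x : V, (G.neighborSet x).Finite)
    (r : ℕ) (x : V) : {y | G.dist x y = r}.Finite :=
  (ball_finite hconn hloc r x).subset fun y hy => le_of_eq hy

lemma sphere_nonempty (hconn : G.Connected) (hloc : ∀ x : V, (G.neighborSet x).Finite)
    [Infinite V] (r : ℕ) (x : V) : {y | G.dist x y = r}.Nonempty := by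
  obtain ⟨y, hy⟩ := (ball_finite hconn hloc r x).infinite_compl.nonempty
  simp only [Set.mem_compl_iff, Set.mem_setOf_eq, not_le] at hy
  obtain ⟨z, hz, -⟩ := exists_dist_split hconn (x := x) (y := y) (k := r) (by omega)
  exact ⟨z, hz⟩

/-- geometric sum identity in ℝ≥0∞ -/
lemma geom_two (j : ℕ) : (∑ i ∈ Finset.range j, (2:ℝ≥0∞)^i) + 1 = 2^j := by
  induction j with
  | zero => simp
  | succ j ih =>
    rw [Finset.sum_range_succ, pow_succ]
    calc (∑ i ∈ Finset.range j, (2:ℝ≥0∞)^i) + 2^j + 1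
        = ((∑ i ∈ Finset.range j, (2:ℝ≥0∞)^i) + 1) + 2^j := by ring
      _ = 2^j + 2^j := by rw [ih]
      _ = 2^j * 2 := by ring

lemma geom_bdd {q : ℝ≥0∞} (hq : 7 ≤ 6 * q) (M : ℕ) :
    (∑ n ∈ Finset.range M, q ^ n) + 6 ≤ 6 * q ^ M := by
  induction M with
  | zero => simp
  | succ M ih =>
    rw [Finset.sum_range_succ, pow_succ]
    calc (∑ n ∈ Finset.range M, q^n) + q^M + 6
        = ((∑ n ∈ Finset.range M, q^n) + 6) + q^M := by ring
      _ ≤ 6 * q^M + q^M := by exact add_le_add_left ih _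
      _ = 7 * q^M := by ring
      _ ≤ 6 * q * q^M := mul_le_mul_left hq _
      _ = 6 * (q^M * q) := by ring

end Aux19

theorem stmt19 {V : Type*} (G : SimpleGraph V) (hconn : G.Connected)
    (hloc : ∀ x : V, (G.neighborSet x).Finite) (hV : Infinite V)
    (hS : ∀ r : ℕ, ∃ C : ℕ, ∀ x : V, sphereCard G x r ≤ C) :
    ∃ c : ℝ≥0∞, c ≠ ⊤ ∧ ∀ (f : V → ℝ), Summable (fun x => |f x|) →
      ∀ r : ℕ, 1 ≤ r → ∀ l : ℝ≥0∞, 0 < l →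
        (({x : V | l ≤ sphereAvg G f x r}).encard : ℝ≥0∞) ≤
          c * ∑' n : {n : ℕ // 2 ^ n ≤ 2 * SG G r},
            (2 : ℝ≥0∞) ^ ((3 * (n : ℕ) : ℝ) / 2) * expander G r *
              (SG G r : ℝ≥0∞) ^ ((1 : ℝ) / 2) *
              (({x : V | (2 : ℝ≥0∞) ^ (n : ℕ) / 2 * l ≤ ENNReal.ofReal |f x|}).encard :
                ℝ≥0∞) := by
  classical
  haveI := hV
  refine ⟨256, by norm_num, ?_⟩
  intro f hf r hr l hl
  -- ## basic facts about spheres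
  have hSfin : ∀ x : V, {y | G.dist x y = r}.Finite := Aux19.sphere_finite hconn hloc r
  have hSne : ∀ x : V, {y | G.dist x y = r}.Nonempty := Aux19.sphere_nonempty hconn hloc r
  have hNcard : ∀ x : V, sphereCard G x r = (hSfin x).toFinset.card := by
    intro x
    have := (hSfin x).fintype
    rw [sphereCard, Set.ncard_eq_toFinset_card']
    congr 1
    exact (Set.Finite.toFinset_eq_toFinset _).symm
  have hN1 : ∀ x : V, 1 ≤ sphereCard G x r := fun x =>
    (Set.ncard_pos (hSfin x)).mpr (hSne x)
  obtain ⟨C, hC⟩ := hS r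
  have hbdd : BddAbove (Set.range fun x : V => sphereCard G x r) :=
    ⟨C, by rintro _ ⟨x, rfl⟩; exact hC x⟩
  have hNle : ∀ x : V, sphereCard G x r ≤ SG G r := fun x => le_csSup hbdd ⟨x, rfl⟩
  have hS1 : 1 ≤ SG G r := le_trans (hN1 (Classical.arbitrary V)) (hNle _)
  have hN0 : ∀ x : V, (sphereCard G x r : ℝ≥0∞) ≠ 0 := by
    intro x
    simp only [ne_eq, Nat.cast_eq_zero]
    have := hN1 x
    omega
  have hNT : ∀ x : V, (sphereCard G x r : ℝ≥0∞) ≠ ⊤ := fun x => ENNReal.natCast_ne_top _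
  -- ## tsum in sphereAvg is a finite sum
  have havg : ∀ x : V, sphereAvg G f x r =
      (∑ z ∈ (hSfin x).toFinset, ENNReal.ofReal |f z|) / (sphereCard G x r : ℝ≥0∞) := by
    intro x
    rw [sphereAvg]
    congr 1
    haveI : Fintype {z : V // G.dist x z = r} := (hSfin x).fintype
    rw [tsum_fintype]
    exact (Finset.sum_subtype ((hSfin x).toFinset)
      (fun z => by rw [Set.Finite.mem_toFinset]; exact Iff.rfl)
      (fun z => ENNReal.ofReal |f z|)).symm
  have havgT : ∀ x : V, sphereAvg G f x r ≠ ⊤ := by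
    intro x
    rw [havg x]
    intro h
    rcases ENNReal.div_eq_top.mp h with ⟨-, h2⟩ | ⟨h1, -⟩
    · exact hN0 x h2
    · exact (ENNReal.sum_lt_top.mpr fun a _ => ENNReal.ofReal_lt_top).ne h1
  -- ## dispose of the case l = ⊤
  rcases eq_or_ne l ⊤ with rfl | hlT
  · have hempty : {x : V | (⊤:ℝ≥0∞) ≤ sphereAvg G f x r} = ∅ := by
      ext x
      simp only [Set.mem_setOf_eq, Set.mem_empty_iff_false, iff_false, top_le_iff]
      exact havgT x
    rw [hempty]
    simp
  -- ## level sets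
  set Lset : ℕ → Set V := fun n => {x : V | (2:ℝ≥0∞)^n/2*l ≤ ENNReal.ofReal |f x|}
    with hLsetdef
  have hLfin : ∀ n : ℕ, (Lset n).Finite := by
    intro n
    set t : ℝ≥0∞ := (2:ℝ≥0∞)^n/2*l with htdef
    have ht0 : t ≠ 0 := by
      rw [htdef]
      refine mul_ne_zero (ENNReal.div_ne_zero.mpr ⟨by positivity, by norm_num⟩) hl.ne'
    have htT : t ≠ ⊤ := by
      rw [htdef]
      refine ENNReal.mul_ne_top ?_ hlT
      exact (ENNReal.div_lt_top (ENNReal.pow_ne_top (by norm_num)) (by norm_num)).ne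
    have htR : 0 < t.toReal := ENNReal.toReal_pos ht0 htT
    have hcof : ∀ᶠ x in Filter.cofinite, |f x| < t.toReal :=
      hf.tendsto_cofinite_zero.eventually (gt_mem_nhds htR)
    have hfin : {x : V | ¬ |f x| < t.toReal}.Finite := Filter.eventually_cofinite.mp hcof
    refine hfin.subset fun x hx => ?_
    simp only [Set.mem_setOf_eq, not_lt] at hx ⊢
    exact (ENNReal.le_ofReal_iff_toReal_le htT (abs_nonneg _)).mp hx
  set LF : ℕ → Finset V := fun n => (hLfin n).toFinset with hLFdef
  have hLFcoe : ∀ n, ((LF n : Finset V) : Set V) = Lset n := fun n => Set.Finite.coe_toFinset _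
  have hLencard : ∀ n, (Lset n).encard = ((LF n).card : ℕ∞) :=
    fun n => (hLfin n).encard_eq_coe_toFinset_card
  have hLanti : ∀ {a b : ℕ}, a ≤ b → Lset b ⊆ Lset a := by
    intro a b hab x hx
    simp only [hLsetdef, Set.mem_setOf_eq] at hx ⊢
    refine le_trans ?_ hx
    gcongr
    · exact one_le_two
  -- ## the scale m
  set m := Nat.log 2 (2 * SG G r) with hmdef
  have hm1 : 2^m ≤ 2 * SG G r := Nat.pow_log_le_self 2 (by omega)
  have hm2 : 2 * SG G r < 2^(m+1) := Nat.lt_pow_succ_log_self (by norm_num) _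
  have hmS : SG G r < 2^m := by
    have : (2:ℕ)^(m+1) = 2 * 2^m := by ring
    omega
  -- ## numeric: q = 2^(1/4)
  set q : ℝ≥0∞ := (2:ℝ≥0∞) ^ ((1:ℝ)/4) with hqdef
  have hq4 : q ^ (4:ℕ) = 2 := by
    rw [hqdef, ← ENNReal.rpow_natCast (_ ^ _), ← ENNReal.rpow_mul]
    norm_num
  have hq_le : q ≤ 4/3 := by
    have h1 : (2:ℝ≥0∞) ≤ (4/3) ^ (((4:ℕ)):ℝ) := by
      rw [ENNReal.rpow_natCast (4/3 : ℝ≥0∞) 4]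
      have h2 : ((4:ℝ≥0∞)/3)^(4:ℕ) = 256 * (81:ℝ≥0∞)⁻¹ := by
        rw [div_eq_mul_inv, mul_pow, ← ENNReal.inv_pow]
        norm_num
      rw [h2]
      calc (2:ℝ≥0∞) = 2 * (81 * 81⁻¹) := by
            rw [ENNReal.mul_inv_cancel (by norm_num) (by norm_num), mul_one]
        _ = 162 * 81⁻¹ := by ring
        _ ≤ 256 * 81⁻¹ := by gcongr <;> norm_num
    calc q = 2 ^ ((1:ℝ)/4) := hqdef
      _ ≤ ((4/3 : ℝ≥0∞) ^ (((4:ℕ)):ℝ)) ^ ((1:ℝ)/4) := ENNReal.rpow_le_rpow h1 (by norm_num)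
      _ = (4/3 : ℝ≥0∞) ^ ((((4:ℕ)):ℝ) * ((1:ℝ)/4)) := (ENNReal.rpow_mul _ _ _).symm
      _ = (4/3 : ℝ≥0∞) ^ (1:ℝ) := by norm_num
      _ = 4/3 := ENNReal.rpow_one _
  have hq_ge : (7:ℝ≥0∞) ≤ 6 * q := by
    have h1 : ((7:ℝ≥0∞)) ^ (((4:ℕ)):ℝ) ≤ (6 * q) ^ (((4:ℕ)):ℝ) := by
      rw [ENNReal.mul_rpow_of_nonneg _ _ (by norm_num)]
      rw [ENNReal.rpow_natCast, ENNReal.rpow_natCast, ENNReal.rpow_natCast, hq4]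
      norm_num
    calc (7:ℝ≥0∞) = ((7:ℝ≥0∞) ^ (((4:ℕ)):ℝ)) ^ ((1:ℝ)/4) := by
          rw [← ENNReal.rpow_mul]
          norm_num
      _ ≤ ((6 * q) ^ (((4:ℕ)):ℝ)) ^ ((1:ℝ)/4) := ENNReal.rpow_le_rpow h1 (by norm_num)
      _ = (6 * q) ^ ((((4:ℕ)):ℝ) * ((1:ℝ)/4)) := (ENNReal.rpow_mul _ _ _).symm
      _ = (6 * q) ^ (1:ℝ) := by norm_num
      _ = 6 * q := ENNReal.rpow_one _
  -- ## casts of SG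
  have hSc0 : ((SG G r : ℝ≥0∞)) ≠ 0 := by
    simp only [ne_eq, Nat.cast_eq_zero]; omega
  have hScT : ((SG G r : ℝ≥0∞)) ≠ ⊤ := ENNReal.natCast_ne_top _
  have hSrp0 : ((SG G r : ℝ≥0∞)) ^ ((1:ℝ)/4) ≠ 0 := by
    simp [ENNReal.rpow_eq_zero_iff, hSc0, hScT]
  have hSrpT : ((SG G r : ℝ≥0∞)) ^ ((1:ℝ)/4) ≠ ⊤ := by
    simp [ENNReal.rpow_eq_top_iff, hSc0, hScT]
  -- ## the weights
  set u : ℕ → ℝ≥0∞ := fun n => (2:ℝ≥0∞)^((3*(n:ℝ))/4) * ((SG G r : ℝ≥0∞))^((1:ℝ)/4) * 16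
    with hudef
  have h2rp0 : ∀ s : ℝ, (2:ℝ≥0∞)^s ≠ 0 := by
    intro s; simp [ENNReal.rpow_eq_zero_iff]
  have h2rpT : ∀ s : ℝ, (2:ℝ≥0∞)^s ≠ ⊤ := by
    intro s; simp [ENNReal.rpow_eq_top_iff]
  have hu0 : ∀ n, u n ≠ 0 := by
    intro n
    exact mul_ne_zero (mul_ne_zero (h2rp0 _) hSrp0) (by norm_num)
  have huT : ∀ n, u n ≠ ⊤ := by
    intro n
    exact ENNReal.mul_ne_top (ENNReal.mul_ne_top (h2rpT _) hSrpT) (by norm_num)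
  set w : ℕ → ℝ≥0∞ := fun n => (u n)⁻¹ with hwdef
  have hw0 : ∀ n, w n ≠ 0 := fun n => ENNReal.inv_ne_zero.mpr (huT n)
  have hwT : ∀ n, w n ≠ ⊤ := fun n => ENNReal.inv_ne_top.mpr (hu0 n)
  -- ## q-power identities
  have hqpow : ∀ n : ℕ, q ^ n = (2:ℝ≥0∞) ^ ((n:ℝ)/4) := by
    intro n
    rw [hqdef, ← ENNReal.rpow_natCast (_ ^ _), ← ENNReal.rpow_mul]
    congr 1
    ring
  have hkey : ∀ n : ℕ, (2:ℝ≥0∞)^n * w n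
      = q ^ n * (((SG G r : ℝ≥0∞))^((1:ℝ)/4) * 16)⁻¹ := by
    intro n
    have h2n : (2:ℝ≥0∞)^n = (2:ℝ≥0∞)^((3*(n:ℝ))/4) * (2:ℝ≥0∞)^((n:ℝ)/4) := by
      rw [← ENNReal.rpow_natCast 2 n, ← ENNReal.rpow_add _ _ (by norm_num) (by norm_num)]
      congr 1
      ring
    have hw' : w n = ((2:ℝ≥0∞)^((3*(n:ℝ))/4))⁻¹ * (((SG G r : ℝ≥0∞))^((1:ℝ)/4) * 16)⁻¹ := by
      rw [hwdef, hudef]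
      simp only []
      rw [mul_assoc, ENNReal.mul_inv (Or.inl (h2rp0 _)) (Or.inl (h2rpT _))]
    rw [h2n, hw', hqpow]
    have hc : (2:ℝ≥0∞)^((3*(n:ℝ))/4) * ((2:ℝ≥0∞)^((3*(n:ℝ))/4))⁻¹ = 1 :=
      ENNReal.mul_inv_cancel (h2rp0 _) (h2rpT _)
    calc (2:ℝ≥0∞)^((3*(n:ℝ))/4) * (2:ℝ≥0∞)^((n:ℝ)/4) *
          (((2:ℝ≥0∞)^((3*(n:ℝ))/4))⁻¹ * (((SG G r:ℝ≥0∞))^((1:ℝ)/4) * 16)⁻¹)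
        = ((2:ℝ≥0∞)^((3*(n:ℝ))/4) * ((2:ℝ≥0∞)^((3*(n:ℝ))/4))⁻¹) *
          ((2:ℝ≥0∞)^((n:ℝ)/4) * (((SG G r:ℝ≥0∞))^((1:ℝ)/4) * 16)⁻¹) := by ring
      _ = (2:ℝ≥0∞)^((n:ℝ)/4) * (((SG G r:ℝ≥0∞))^((1:ℝ)/4) * 16)⁻¹ := by rw [hc, one_mul]
  -- ## q^m bound
  have hqm : q ^ m ≤ (4/3) * ((SG G r : ℝ≥0∞))^((1:ℝ)/4) := by
    have h2m : ((2:ℝ≥0∞))^(m:ℕ) ≤ ((2 * SG G r : ℕ) : ℝ≥0∞) := by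
      calc ((2:ℝ≥0∞))^(m:ℕ) = (((2:ℕ)^m : ℕ) : ℝ≥0∞) := by push_cast; ring
        _ ≤ ((2 * SG G r : ℕ) : ℝ≥0∞) := by exact_mod_cast Nat.cast_le.mpr hm1
    calc q ^ m = (2:ℝ≥0∞) ^ ((m:ℝ)/4) := hqpow m
      _ = ((2:ℝ≥0∞) ^ ((m:ℝ))) ^ ((1:ℝ)/4) := by
          rw [← ENNReal.rpow_mul]; congr 1; ring
      _ = ((2:ℝ≥0∞) ^ (m:ℕ)) ^ ((1:ℝ)/4) := by rw [ENNReal.rpow_natCast]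
      _ ≤ (((2 * SG G r : ℕ) : ℝ≥0∞)) ^ ((1:ℝ)/4) := ENNReal.rpow_le_rpow h2m (by norm_num)
      _ = ((2:ℝ≥0∞) * (SG G r : ℝ≥0∞)) ^ ((1:ℝ)/4) := by push_cast; ring_nf
      _ = (2:ℝ≥0∞) ^ ((1:ℝ)/4) * ((SG G r : ℝ≥0∞)) ^ ((1:ℝ)/4) :=
          ENNReal.mul_rpow_of_nonneg _ _ (by norm_num)
      _ = q * ((SG G r : ℝ≥0∞)) ^ ((1:ℝ)/4) := by rw [hqdef]
      _ ≤ (4/3) * ((SG G r : ℝ≥0∞)) ^ ((1:ℝ)/4) := mul_le_mul_left hq_le _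
  -- ## the weight sum bound
  have hW : ∑ n ∈ Finset.range m, (2:ℝ≥0∞)^n * w n ≤ 1/2 := by
    have hsum : ∑ n ∈ Finset.range m, (2:ℝ≥0∞)^n * w n
        = (∑ n ∈ Finset.range m, q ^ n) * (((SG G r : ℝ≥0∞))^((1:ℝ)/4) * 16)⁻¹ := by
      rw [Finset.sum_mul]
      exact Finset.sum_congr rfl fun n _ => hkey n
    rw [hsum]
    have hgs : (∑ n ∈ Finset.range m, q ^ n) ≤ 8 * ((SG G r : ℝ≥0∞))^((1:ℝ)/4) := by
      calc (∑ n ∈ Finset.range m, q ^ n) ≤ (∑ n ∈ Finset.range m, q ^ n) + 6 := le_self_add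
        _ ≤ 6 * q ^ m := Aux19.geom_bdd hq_ge m
        _ ≤ 6 * ((4/3) * ((SG G r : ℝ≥0∞))^((1:ℝ)/4)) := mul_le_mul_right hqm _
        _ = 8 * ((SG G r : ℝ≥0∞))^((1:ℝ)/4) := by
            rw [← mul_assoc]
            congr 1
            rw [div_eq_mul_inv, ← mul_assoc]
            rw [show (6:ℝ≥0∞)*4 = 8*3 by norm_num]
            rw [mul_assoc, ENNReal.mul_inv_cancel (by norm_num) (by norm_num), mul_one]
    calc (∑ n ∈ Finset.range m, q ^ n) * (((SG G r : ℝ≥0∞))^((1:ℝ)/4) * 16)⁻¹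
        ≤ (8 * ((SG G r : ℝ≥0∞))^((1:ℝ)/4)) * (((SG G r : ℝ≥0∞))^((1:ℝ)/4) * 16)⁻¹ :=
          mul_le_mul_left hgs _
      _ = 8 * (((SG G r : ℝ≥0∞))^((1:ℝ)/4) * (((SG G r : ℝ≥0∞))^((1:ℝ)/4))⁻¹) * 16⁻¹ := by
          rw [ENNReal.mul_inv (Or.inl hSrp0) (Or.inl hSrpT)]
          ring
      _ = 8 * 16⁻¹ := by rw [ENNReal.mul_inv_cancel hSrp0 hSrpT, mul_one]
      _ = 1/2 := by
          rw [show (16:ℝ≥0∞) = 8 * 2 by norm_num, ENNReal.mul_inv (by norm_num) (by norm_num),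
            ← mul_assoc, ENNReal.mul_inv_cancel (by norm_num) (by norm_num), one_mul, one_div]
  -- ## expander lower bound
  have hEinv : ((SG G r : ℝ≥0∞))⁻¹ ≤ expander G r := by
    set x₀ := Classical.arbitrary V with hx₀
    set A : Finset V := (hSfin x₀).toFinset with hA
    have hAne : A.Nonempty := by
      obtain ⟨z, hz⟩ := hSne x₀
      exact ⟨z, (hSfin x₀).mem_toFinset.mpr hz⟩
    have hAcard : A.card = sphereCard G x₀ r := (hNcard x₀).symm
    have hterm : (((SG G r : ℝ≥0∞)))⁻¹ ≤
        ((∑ x ∈ ({x₀} : Finset V), (((A : Set V) ∩ {y | G.dist x y = r}).ncard : ℝ≥0∞) /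
          (sphereCard G x r : ℝ≥0∞)) ^ 2) / ((A.card : ℝ≥0∞) * (({x₀} : Finset V).card : ℝ≥0∞)) := by
      have hAS : (A : Set V) = {y | G.dist x₀ y = r} := (hSfin x₀).coe_toFinset
      rw [Finset.sum_singleton, hAS, Set.inter_self]
      have : ({y | G.dist x₀ y = r}.ncard : ℝ≥0∞) = (sphereCard G x₀ r : ℝ≥0∞) := rfl
      rw [this, ENNReal.div_self (hN0 x₀) (hNT x₀)]
      rw [one_pow, Finset.card_singleton, Nat.cast_one, mul_one, hAcard, one_div]
      exact ENNReal.inv_le_inv.mpr (by exact_mod_cast hNle x₀)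
    refine le_trans hterm ?_
    rw [expander]
    exact le_iSup_of_le A (le_iSup_of_le hAne (le_iSup_of_le ({x₀} : Finset V)
      (le_iSup_of_le (Finset.singleton_nonempty x₀) le_rfl)))
  -- ## counting functions
  set cnt : ℕ → V → ℕ := fun n x => (Lset n ∩ {y | G.dist x y = r}).ncard with hcntdef
  set rho : ℕ → V → ℝ≥0∞ := fun n x => (cnt n x : ℝ≥0∞) / (sphereCard G x r : ℝ≥0∞)
    with hrhodef
  set Bp : ℕ → Set V := fun n => {x | w n ≤ rho n x} with hBpdef
  have hcnt_eq : ∀ n x, cnt n x = ((hSfin x).toFinset.filter (fun z => z ∈ Lset n)).card := by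
    intro n x
    rw [hcntdef]
    simp only []
    rw [← Set.ncard_coe_finset]
    congr 1
    ext z
    simp only [Finset.coe_filter, Set.mem_setOf_eq, Set.Finite.mem_toFinset,
      Set.mem_inter_iff]
    tauto
  have hind : ∀ n x, ∑ z ∈ (hSfin x).toFinset, (if z ∈ Lset n then (1:ℝ≥0∞) else 0)
      = (cnt n x : ℝ≥0∞) := by
    intro n x
    rw [Finset.sum_boole, hcnt_eq]
  -- ## the covering
  have hcov : {x : V | l ≤ sphereAvg G f x r} ⊆
      (⋃ z ∈ Lset m, {x : V | G.dist z x = r}) ∪ ⋃ n ∈ Finset.range m, Bp n := by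
    intro x hx
    simp only [Set.mem_setOf_eq] at hx
    by_cases hcase : ∃ z ∈ {y | G.dist x y = r}, z ∈ Lset m
    · obtain ⟨z, hz1, hz2⟩ := hcase
      refine Or.inl (Set.mem_biUnion hz2 ?_)
      simp only [Set.mem_setOf_eq] at hz1 ⊢
      rwa [SimpleGraph.dist_comm]
    · push_neg at hcase
      right
      by_contra hcon
      have hρlt : ∀ n, n ∈ Finset.range m → rho n x < w n := by
        intro n hn
        by_contra hge
        refine absurd (Set.mem_biUnion hn ?_) hcon
        simp only [hBpdef, Set.mem_setOf_eq]
        exact not_lt.mp hge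
      -- notation
      have hB : ∀ z ∈ (hSfin x).toFinset, ENNReal.ofReal |f z| ≤
          l/2 + ∑ n ∈ Finset.range m, (2:ℝ≥0∞)^n * (l/2) * (if z ∈ Lset n then 1 else 0) := by
        intro z hz
        have hzS : z ∈ {y | G.dist x y = r} := (hSfin x).mem_toFinset.mp hz
        have hzL : z ∉ Lset m := hcase z hzS
        have htm : ENNReal.ofReal |f z| < (2:ℝ≥0∞)^m/2*l := by
          rw [hLsetdef] at hzL
          simp only [Set.mem_setOf_eq] at hzL
          exact not_le.mp hzL
        by_cases h0 : z ∈ Lset 0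
        · have hm0 : m ≠ 0 := fun h => hzL (h ▸ h0)
          set k := Nat.findGreatest (fun j => z ∈ Lset j) (m-1) with hkdef
          have hk_le : k ≤ m - 1 := Nat.findGreatest_le _
          have hPk : z ∈ Lset k := by
            rw [hkdef]
            exact Nat.findGreatest_spec (P := fun j => z ∈ Lset j) (Nat.zero_le _) h0
          have hnotnext : ENNReal.ofReal |f z| < (2:ℝ≥0∞)^(k+1)/2*l := by
            by_cases hkm : k + 1 ≤ m - 1
            · have hnm : z ∉ Lset (k+1) :=
                Nat.findGreatest_is_greatest (Nat.lt_succ_self k) hkm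
              rw [hLsetdef] at hnm
              simp only [Set.mem_setOf_eq] at hnm
              exact not_le.mp hnm
            · have hkm' : k + 1 = m := by omega
              rw [hkm']
              exact htm
          have hgeo := Aux19.geom_two (k+1)
          calc ENNReal.ofReal |f z| ≤ (2:ℝ≥0∞)^(k+1)/2*l := le_of_lt hnotnext
            _ = ((∑ i ∈ Finset.range (k+1), (2:ℝ≥0∞)^i) + 1)/2*l := by rw [hgeo]
            _ = (∑ i ∈ Finset.range (k+1), (2:ℝ≥0∞)^i)/2*l + 1/2*l := by
                rw [ENNReal.add_div, add_mul]
            _ = (∑ i ∈ Finset.range (k+1), (2:ℝ≥0∞)^i/2*l) + l/2 := by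
                simp only [div_eq_mul_inv, Finset.sum_mul]
                ring
            _ ≤ (∑ n ∈ Finset.range m, (2:ℝ≥0∞)^n * (l/2) * (if z ∈ Lset n then 1 else 0))
                + l/2 := by
                refine add_le_add_left ?_ _
                have hstep : ∀ i ∈ Finset.range (k+1),
                    (2:ℝ≥0∞)^i/2*l = (2:ℝ≥0∞)^i * (l/2) * (if z ∈ Lset i then 1 else 0) := by
                  intro i hi
                  have hiL : z ∈ Lset i :=
                    hLanti (by simp only [Finset.mem_range] at hi; omega) hPk
                  rw [if_pos hiL, mul_one]
                  simp only [div_eq_mul_inv]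
                  ring
                rw [Finset.sum_congr rfl hstep]
                refine Finset.sum_le_sum_of_subset_of_nonneg ?_ (fun _ _ _ => zero_le)
                exact Finset.range_subset_range.mpr (by omega)
            _ = l/2 + _ := add_comm _ _
        · have h0' : ENNReal.ofReal |f z| < (2:ℝ≥0∞)^0/2*l := by
            rw [hLsetdef] at h0
            simp only [Set.mem_setOf_eq] at h0
            exact not_le.mp h0
          refine le_trans (le_of_lt h0') (le_trans (le_of_eq ?_) le_self_add)
          rw [pow_zero, one_div, div_eq_mul_inv, mul_comm]
      -- summation
      have hA : l * (sphereCard G x r : ℝ≥0∞) ≤ ∑ z ∈ (hSfin x).toFinset, ENNReal.ofReal |f z| := by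
        rw [havg x] at hx
        exact (ENNReal.le_div_iff_mul_le (Or.inl (hN0 x)) (Or.inl (hNT x))).mp hx
      have hsum : ∑ z ∈ (hSfin x).toFinset, ENNReal.ofReal |f z| ≤
          (sphereCard G x r : ℝ≥0∞) * (l/2)
            + ∑ n ∈ Finset.range m, (2:ℝ≥0∞)^n * (l/2) * (cnt n x : ℝ≥0∞) := by
        calc ∑ z ∈ (hSfin x).toFinset, ENNReal.ofReal |f z|
            ≤ ∑ z ∈ (hSfin x).toFinset, (l/2 + ∑ n ∈ Finset.range m,
                (2:ℝ≥0∞)^n * (l/2) * (if z ∈ Lset n then 1 else 0)) := Finset.sum_le_sum hB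
          _ = (hSfin x).toFinset.card * (l/2) + ∑ z ∈ (hSfin x).toFinset,
                ∑ n ∈ Finset.range m, (2:ℝ≥0∞)^n * (l/2) * (if z ∈ Lset n then 1 else 0) := by
              rw [Finset.sum_add_distrib, Finset.sum_const, nsmul_eq_mul]
          _ = (sphereCard G x r : ℝ≥0∞) * (l/2) + ∑ n ∈ Finset.range m,
                (2:ℝ≥0∞)^n * (l/2) * (cnt n x : ℝ≥0∞) := by
              rw [← hNcard x, Finset.sum_comm]
              congr 1
              refine Finset.sum_congr rfl fun n _ => ?_
              rw [← Finset.mul_sum, hind]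
      -- the cancellation
      have hlhalfT : l/2 ≠ ⊤ := (ENNReal.div_lt_top hlT (by norm_num)).ne
      have hNl2T : (sphereCard G x r : ℝ≥0∞) * (l/2) ≠ ⊤ :=
        ENNReal.mul_ne_top (hNT x) hlhalfT
      have hhalf : (sphereCard G x r : ℝ≥0∞) * (l/2) ≤
          ∑ n ∈ Finset.range m, (2:ℝ≥0∞)^n * (l/2) * (cnt n x : ℝ≥0∞) := by
        have heq : l * (sphereCard G x r : ℝ≥0∞) =
            (sphereCard G x r : ℝ≥0∞) * (l/2) + (sphereCard G x r : ℝ≥0∞) * (l/2) := by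
          rw [← mul_add, ENNReal.add_halves, mul_comm]
        have := le_trans hA hsum
        rw [heq] at this
        exact (ENNReal.add_le_add_iff_left hNl2T).mp this
      -- upper bound via the weights
      have hcntle : ∀ n ∈ Finset.range m, (cnt n x : ℝ≥0∞) ≤ w n * (sphereCard G x r : ℝ≥0∞) := by
        intro n hn
        have h1 : (cnt n x : ℝ≥0∞) = rho n x * (sphereCard G x r : ℝ≥0∞) := by
          rw [hrhodef]
          simp only []
          rw [ENNReal.div_mul_cancel (hN0 x) (hNT x)]
        rw [h1]
        exact mul_le_mul_left (le_of_lt (hρlt n hn)) _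
      have hfinal : ∑ n ∈ Finset.range m, (2:ℝ≥0∞)^n * (l/2) * (cnt n x : ℝ≥0∞) ≤
          (sphereCard G x r : ℝ≥0∞) * (l/2) * (1/2) := by
        calc ∑ n ∈ Finset.range m, (2:ℝ≥0∞)^n * (l/2) * (cnt n x : ℝ≥0∞)
            ≤ ∑ n ∈ Finset.range m, (2:ℝ≥0∞)^n * (l/2) * (w n * (sphereCard G x r : ℝ≥0∞)) :=
              Finset.sum_le_sum fun n hn => mul_le_mul_right (hcntle n hn) _
          _ = (sphereCard G x r : ℝ≥0∞) * (l/2) * ∑ n ∈ Finset.range m, (2:ℝ≥0∞)^n * w n := by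
              rw [Finset.mul_sum]
              refine Finset.sum_congr rfl fun n _ => ?_
              ring
          _ ≤ (sphereCard G x r : ℝ≥0∞) * (l/2) * (1/2) := mul_le_mul_right hW _
      have hb0 : (sphereCard G x r : ℝ≥0∞) * (l/2) ≠ 0 := by
        refine mul_ne_zero (hN0 x) ?_
        refine ENNReal.div_ne_zero.mpr ⟨hl.ne', by norm_num⟩
      have : (sphereCard G x r : ℝ≥0∞) * (l/2) < (sphereCard G x r : ℝ≥0∞) * (l/2) := by
        calc (sphereCard G x r : ℝ≥0∞) * (l/2)
            ≤ (sphereCard G x r : ℝ≥0∞) * (l/2) * (1/2) := le_trans hhalf hfinal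
          _ = ((sphereCard G x r : ℝ≥0∞) * (l/2)) / 2 := mul_one_div _ _
          _ < (sphereCard G x r : ℝ≥0∞) * (l/2) := ENNReal.half_lt_self hb0 hNl2T
      exact absurd this (lt_irrefl _)
  -- ## finite covering sets
  set UF : ℕ → Finset V := fun n => (LF n).biUnion (fun z => (hSfin z).toFinset) with hUFdef
  have hUFmem : ∀ n y, (∃ z ∈ Lset n, G.dist z y = r) → y ∈ UF n := by
    rintro n y ⟨z, hz1, hz2⟩
    exact Finset.mem_biUnion.mpr ⟨z, (hLfin n).mem_toFinset.mpr hz1,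
      (hSfin z).mem_toFinset.mpr hz2⟩
  have hBpUF : ∀ n, Bp n ⊆ ↑(UF n) := by
    intro n x hx
    rw [hBpdef] at hx
    simp only [Set.mem_setOf_eq] at hx
    have hcnt0 : cnt n x ≠ 0 := by
      intro h
      rw [hrhodef] at hx
      simp only [h, Nat.cast_zero, ENNReal.zero_div, le_zero_iff] at hx
      exact (hw0 n) hx
    obtain ⟨z, hz⟩ := Set.nonempty_of_ncard_ne_zero
      (s := Lset n ∩ {y | G.dist x y = r}) hcnt0
    exact hUFmem n x ⟨z, hz.1, by
      have := hz.2
      simp only [Set.mem_setOf_eq] at this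
      rwa [SimpleGraph.dist_comm]⟩
  set BF : ℕ → Finset V := fun n => (UF n).filter (fun x => x ∈ Bp n) with hBFdef
  have hBpBF : ∀ n, Bp n ⊆ ↑(BF n) := fun n x hx =>
    Finset.mem_coe.mpr (Finset.mem_filter.mpr ⟨hBpUF n hx, hx⟩)
  have hBFw : ∀ n, ∀ x ∈ BF n, w n ≤ rho n x := by
    intro n x hx
    have := (Finset.mem_filter.mp hx).2
    rw [hBpdef] at this
    exact this
  have hUcard : ∀ n, (UF n).card ≤ (LF n).card * SG G r := by
    intro n
    calc (UF n).card ≤ ∑ z ∈ LF n, (hSfin z).toFinset.card := Finset.card_biUnion_le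
      _ ≤ ∑ z ∈ LF n, SG G r := Finset.sum_le_sum (fun z _ => by rw [← hNcard z]; exact hNle z)
      _ = (LF n).card * SG G r := by rw [Finset.sum_const, smul_eq_mul]
  -- ## u squared
  have husq : ∀ n : ℕ, (u n)^2 = (2:ℝ≥0∞)^((3*(n:ℝ))/2) * ((SG G r : ℝ≥0∞))^((1:ℝ)/2) * 256 := by
    intro n
    rw [hudef]
    simp only []
    rw [mul_pow, mul_pow]
    congr 1
    · congr 1
      · rw [sq, ← ENNReal.rpow_add _ _ (by norm_num) (by norm_num)]
        congr 1
        ring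
      · rw [sq, ← ENNReal.rpow_add _ _ hSc0 hScT]
        congr 1
        ring
    · norm_num
  -- ## bound on the size of each bad set
  have hBcard : ∀ n : ℕ, ((BF n).card : ℝ≥0∞) ≤
      256 * ((2:ℝ≥0∞)^((3*(n:ℝ))/2) * expander G r * ((SG G r : ℝ≥0∞))^((1:ℝ)/2)
        * ((LF n).card : ℝ≥0∞)) := by
    intro n
    rcases (BF n).eq_empty_or_nonempty with hBe | hBne
    · rw [hBe]
      simp
    · have hLne : (LF n).Nonempty := by
        obtain ⟨x, hx⟩ := hBne
        have hx2 := (Finset.mem_filter.mp hx).2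
        rw [hBpdef] at hx2
        simp only [Set.mem_setOf_eq] at hx2
        have hcnt0 : cnt n x ≠ 0 := by
          intro h
          rw [hrhodef] at hx2
          simp only [h, Nat.cast_zero, ENNReal.zero_div, le_zero_iff] at hx2
          exact (hw0 n) hx2
        obtain ⟨z, hz⟩ := Set.nonempty_of_ncard_ne_zero
          (s := Lset n ∩ {y | G.dist x y = r}) hcnt0
        exact ⟨z, (hLfin n).mem_toFinset.mpr hz.1⟩
      set a : ℝ≥0∞ := ((LF n).card : ℝ≥0∞) with hadef
      set b : ℝ≥0∞ := ((BF n).card : ℝ≥0∞) with hbdef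
      have ha0 : a ≠ 0 := by
        rw [hadef]; simp only [ne_eq, Nat.cast_eq_zero, Finset.card_eq_zero]
        exact hLne.ne_empty
      have haT : a ≠ ⊤ := ENNReal.natCast_ne_top _
      have hb0 : b ≠ 0 := by
        rw [hbdef]; simp only [ne_eq, Nat.cast_eq_zero, Finset.card_eq_zero]
        exact hBne.ne_empty
      have hbT : b ≠ ⊤ := ENNReal.natCast_ne_top _
      have hterm : ((∑ x ∈ BF n, (((LF n : Finset V) : Set V) ∩ {y | G.dist x y = r}).ncard
            / (sphereCard G x r : ℝ≥0∞)) ^ 2) / (a * b) ≤ expander G r := by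
        rw [expander]
        exact le_iSup_of_le (LF n) (le_iSup_of_le hLne (le_iSup_of_le (BF n)
          (le_iSup_of_le hBne le_rfl)))
      have hsum_eq : (∑ x ∈ BF n, ((((LF n : Finset V) : Set V) ∩ {y | G.dist x y = r}).ncard : ℝ≥0∞)
            / (sphereCard G x r : ℝ≥0∞)) = ∑ x ∈ BF n, rho n x := by
        refine Finset.sum_congr rfl fun x _ => ?_
        rw [hLFcoe n]
      have hlow : b * w n ≤ ∑ x ∈ BF n, rho n x := by
        calc b * w n = ∑ _x ∈ BF n, w n := by rw [Finset.sum_const, nsmul_eq_mul, hbdef]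
          _ ≤ ∑ x ∈ BF n, rho n x := Finset.sum_le_sum (hBFw n)
      have hsq : (b * w n)^2 / (a * b) ≤ expander G r := by
        refine le_trans ?_ hterm
        rw [hsum_eq]
        gcongr
      have h1 : (b * w n)^2 ≤ expander G r * (a * b) := by
        rw [ENNReal.div_le_iff_le_mul (Or.inl (mul_ne_zero ha0 hb0))
          (Or.inl (ENNReal.mul_ne_top haT hbT))] at hsq
        exact hsq
      have h2 : b * (b * (w n)^2) ≤ b * (expander G r * a) := by
        calc b * (b * (w n)^2) = (b * w n)^2 := by ring
          _ ≤ expander G r * (a * b) := h1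
          _ = b * (expander G r * a) := by ring
      have h3 : b * (w n)^2 ≤ expander G r * a :=
        (ENNReal.mul_le_mul_iff_right hb0 hbT).mp h2
      have h4 : b ≤ expander G r * a * ((u n)^2) := by
        have hwu : (w n)^2 * (u n)^2 = 1 := by
          rw [hwdef]
          simp only []
          rw [← mul_pow, ENNReal.inv_mul_cancel (hu0 n) (huT n), one_pow]
        calc b = b * ((w n)^2 * (u n)^2) := by rw [hwu, mul_one]
          _ = (b * (w n)^2) * (u n)^2 := by ring
          _ ≤ (expander G r * a) * (u n)^2 := mul_le_mul_left h3 _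
      calc b ≤ expander G r * a * ((u n)^2) := h4
        _ = 256 * ((2:ℝ≥0∞)^((3*(n:ℝ))/2) * expander G r * ((SG G r : ℝ≥0∞))^((1:ℝ)/2) * a) := by
            rw [husq n]
            ring
  -- ## bound for the case-1 set
  have hSG_le : ((SG G r : ℝ≥0∞)) ≤
      256 * ((2:ℝ≥0∞)^((3*(m:ℝ))/2) * expander G r * ((SG G r : ℝ≥0∞))^((1:ℝ)/2)) := by
    have hS2m : ((SG G r : ℝ≥0∞)) ≤ (2:ℝ≥0∞)^((m:ℝ)) := by
      rw [ENNReal.rpow_natCast]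
      calc ((SG G r : ℝ≥0∞)) ≤ (((2:ℕ)^m : ℕ) : ℝ≥0∞) := by exact_mod_cast le_of_lt hmS
        _ = (2:ℝ≥0∞)^(m:ℕ) := by push_cast; ring
    have hS32 : ((SG G r : ℝ≥0∞))^((3:ℝ)/2) ≤ (2:ℝ≥0∞)^((3*(m:ℝ))/2) := by
      calc ((SG G r : ℝ≥0∞))^((3:ℝ)/2) ≤ ((2:ℝ≥0∞)^((m:ℝ)))^((3:ℝ)/2) :=
            ENNReal.rpow_le_rpow hS2m (by norm_num)
        _ = (2:ℝ≥0∞)^((m:ℝ) * ((3:ℝ)/2)) := (ENNReal.rpow_mul _ _ _).symm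
        _ = (2:ℝ≥0∞)^((3*(m:ℝ))/2) := by congr 1; ring
    have hSsplit : ((SG G r : ℝ≥0∞))^((3:ℝ)/2) * ((SG G r : ℝ≥0∞))^((1:ℝ)/2)
        * ((SG G r : ℝ≥0∞))⁻¹ = (SG G r : ℝ≥0∞) := by
      rw [← ENNReal.rpow_add _ _ hSc0 hScT]
      rw [show ((3:ℝ)/2 + 1/2) = ((2:ℕ):ℝ) by norm_num, ENNReal.rpow_natCast]
      rw [sq, mul_assoc, ENNReal.mul_inv_cancel hSc0 hScT, mul_one]
    have hinv : ((SG G r : ℝ≥0∞))⁻¹ ≤ 256 * expander G r :=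
      le_trans hEinv (le_mul_of_one_le_left zero_le (by norm_num))
    calc ((SG G r : ℝ≥0∞))
        = ((SG G r : ℝ≥0∞))^((3:ℝ)/2) * ((SG G r : ℝ≥0∞))^((1:ℝ)/2)
          * ((SG G r : ℝ≥0∞))⁻¹ := hSsplit.symm
      _ ≤ (2:ℝ≥0∞)^((3*(m:ℝ))/2) * ((SG G r : ℝ≥0∞))^((1:ℝ)/2) * (256 * expander G r) :=
          mul_le_mul' (mul_le_mul' hS32 le_rfl) hinv
      _ = 256 * ((2:ℝ≥0∞)^((3*(m:ℝ))/2) * expander G r * ((SG G r : ℝ≥0∞))^((1:ℝ)/2)) := by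
          ring
  -- ## assembly
  set TotF : Finset V := UF m ∪ (Finset.range m).biUnion BF with hTotdef
  have hsub : {x : V | l ≤ sphereAvg G f x r} ⊆ ↑TotF := by
    intro x hx
    rcases hcov hx with h | h
    · simp only [Set.mem_iUnion] at h
      obtain ⟨z, hz1, hz2⟩ := h
      simp only [Set.mem_setOf_eq] at hz2
      exact Finset.mem_coe.mpr (Finset.mem_union_left _ (hUFmem m x ⟨z, hz1, hz2⟩))
    · simp only [Set.mem_iUnion] at h
      obtain ⟨n, hn, hxB⟩ := h
      exact Finset.mem_coe.mpr (Finset.mem_union_right _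
        (Finset.mem_biUnion.mpr ⟨n, hn, Finset.mem_coe.mp (hBpBF n hxB)⟩))
  have hcast : (({x : V | l ≤ sphereAvg G f x r}).encard : ℝ≥0∞) ≤ (TotF.card : ℝ≥0∞) := by
    have hencard : ({x : V | l ≤ sphereAvg G f x r}).encard ≤ (TotF.card : ℕ∞) := by
      calc ({x : V | l ≤ sphereAvg G f x r}).encard ≤ (↑TotF : Set V).encard :=
            Set.encard_mono hsub
        _ = (TotF.card : ℕ∞) := Set.encard_coe_eq_coe_finsetCard _
    calc (({x : V | l ≤ sphereAvg G f x r}).encard : ℝ≥0∞)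
        ≤ (((TotF.card : ℕ∞)) : ℝ≥0∞) := ENat.toENNReal_le.mpr hencard
      _ = (TotF.card : ℝ≥0∞) := by simp
  have hcount : (TotF.card : ℝ≥0∞) ≤
      ((UF m).card : ℝ≥0∞) + ∑ n ∈ Finset.range m, ((BF n).card : ℝ≥0∞) := by
    have h1 : TotF.card ≤ (UF m).card + ∑ n ∈ Finset.range m, (BF n).card := by
      calc TotF.card ≤ (UF m).card + ((Finset.range m).biUnion BF).card :=
            Finset.card_union_le _ _
        _ ≤ (UF m).card + ∑ n ∈ Finset.range m, (BF n).card :=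
            Nat.add_le_add_left Finset.card_biUnion_le _
    calc (TotF.card : ℝ≥0∞) ≤ (((UF m).card + ∑ n ∈ Finset.range m, (BF n).card : ℕ) : ℝ≥0∞) :=
          Nat.cast_le.mpr h1
      _ = ((UF m).card : ℝ≥0∞) + ∑ n ∈ Finset.range m, ((BF n).card : ℝ≥0∞) := by push_cast; rfl
  set T : ℕ → ℝ≥0∞ := fun n => (2:ℝ≥0∞)^((3*(n:ℝ))/2) * expander G r *
    ((SG G r : ℝ≥0∞))^((1:ℝ)/2) * ((Lset n).encard : ℝ≥0∞) with hTdef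
  have hTLF : ∀ n, T n = (2:ℝ≥0∞)^((3*(n:ℝ))/2) * expander G r *
      ((SG G r : ℝ≥0∞))^((1:ℝ)/2) * ((LF n).card : ℝ≥0∞) := by
    intro n
    rw [hTdef]
    simp only []
    rw [hLencard n]
    simp
  have hUFle : ((UF m).card : ℝ≥0∞) ≤ 256 * T m := by
    calc ((UF m).card : ℝ≥0∞) ≤ (((LF m).card * SG G r : ℕ) : ℝ≥0∞) := Nat.cast_le.mpr (hUcard m)
      _ = ((LF m).card : ℝ≥0∞) * ((SG G r : ℝ≥0∞)) := by push_cast; ring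
      _ ≤ ((LF m).card : ℝ≥0∞) *
          (256 * ((2:ℝ≥0∞)^((3*(m:ℝ))/2) * expander G r * ((SG G r : ℝ≥0∞))^((1:ℝ)/2))) :=
          mul_le_mul_right hSG_le _
      _ = 256 * T m := by rw [hTLF m]; ring
  have hBFle : ∀ n, ((BF n).card : ℝ≥0∞) ≤ 256 * T n := by
    intro n
    calc ((BF n).card : ℝ≥0∞) ≤ 256 * ((2:ℝ≥0∞)^((3*(n:ℝ))/2) * expander G r *
          ((SG G r : ℝ≥0∞))^((1:ℝ)/2) * ((LF n).card : ℝ≥0∞)) := hBcard n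
      _ = 256 * T n := by rw [hTLF n]
  have htsum : ∑ n ∈ Finset.range (m+1), T n ≤
      ∑' (n : {n : ℕ // 2^n ≤ 2 * SG G r}), T ↑n := by
    refine le_trans ?_ (le_of_eq (tsum_subtype {n : ℕ | 2^n ≤ 2 * SG G r} T).symm)
    calc ∑ n ∈ Finset.range (m+1), T n
        = ∑ n ∈ Finset.range (m+1), Set.indicator {n : ℕ | 2^n ≤ 2 * SG G r} T n := by
          refine Finset.sum_congr rfl fun n hn => ?_
          rw [Set.indicator_of_mem]
          simp only [Set.mem_setOf_eq]
          calc (2:ℕ)^n ≤ 2^m := Nat.pow_le_pow_right (by norm_num)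
                (by simp only [Finset.mem_range] at hn; omega)
            _ ≤ 2 * SG G r := hm1
      _ ≤ ∑' (n : ℕ), Set.indicator {n : ℕ | 2^n ≤ 2 * SG G r} T n :=
          ENNReal.sum_le_tsum _
  calc (({x : V | l ≤ sphereAvg G f x r}).encard : ℝ≥0∞)
      ≤ (TotF.card : ℝ≥0∞) := hcast
    _ ≤ ((UF m).card : ℝ≥0∞) + ∑ n ∈ Finset.range m, ((BF n).card : ℝ≥0∞) := hcount
    _ ≤ 256 * T m + ∑ n ∈ Finset.range m, 256 * T n :=
        add_le_add hUFle (Finset.sum_le_sum fun n _ => hBFle n)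
    _ = 256 * ∑ n ∈ Finset.range (m+1), T n := by
        rw [Finset.sum_range_succ, ← Finset.mul_sum]
        ring
    _ ≤ 256 * ∑' (n : {n : ℕ // 2^n ≤ 2 * SG G r}), T ↑n := mul_le_mul_right htsum _
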